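/- Assume N > 0, γ > 0, p̂ = N/γ, and cost coefficients c_1, …, c_n ≥ 0. If a profile (S_1, …, S_n) of feasible supply functions is a pure-strategy Nash equilibrium of the pay-as-bid auction game with strategy space all feasible supply functions (i.e., for each i, S_i maximizes u_i(·, S_{-i}) over feasible supply functions), then S_i is identically zero on [0, p̂] for every i. -/

import Mathlib

open Set

/-- A feasible supply function on `[0, phat]`: continuous, nondecreasing, zero at zero. -/
def Feasible (phat : ℝ) (S : ℝ → ℝ) : Prop :=
  ContinuousOn S (Icc 0 phat) ∧ MonotoneOn S (Icc 0 phat) ∧ S 0 = 0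

/-- `p` is a market-clearing price for the profile `S` with demand `D(p) = N - γ p`. -/
def Clears (N γ : ℝ) {n : ℕ} (S : Fin n → ℝ → ℝ) (p : ℝ) : Prop :=
  p ∈ Icc 0 (N / γ) ∧ N - γ * p = ∑ i, S i p

/-- Pay-as-bid utility of an agent with cost coefficient `c`, supply `S`,
at clearing price `pstar`. -/
noncomputable def utility (c : ℝ) (S : ℝ → ℝ) (pstar : ℝ) : ℝ :=
  pstar * S pstar - (∫ p in (0:ℝ)..pstar, S p) - c * S pstar ^ 2

/-- `S` is `K`-Lipschitz on `[0, phat]`. -/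
def KLip (phat K : ℝ) (S : ℝ → ℝ) : Prop :=
  ∀ x ∈ Icc 0 phat, ∀ y ∈ Icc 0 phat, |S x - S y| ≤ K * |x - y|

/-- any pure-strategy Nash equilibrium of the pay-as-bid auction game
with strategy space all feasible supply functions consists of identically zero
supply functions. -/
theorem stmt2 (n : ℕ) (N γ : ℝ) (hN : 0 < N) (hγ : 0 < γ)
    (c : Fin n → ℝ) (hc : ∀ i, 0 ≤ c i)
    (S : Fin n → ℝ → ℝ) (hS : ∀ j, Feasible (N / γ) (S j))
    (pstar : ℝ) (hp : Clears N γ S pstar)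
    (hNash : ∀ i, ∀ T, Feasible (N / γ) T →
      ∀ q, Clears N γ (Function.update S i T) q →
        utility (c i) T q ≤ utility (c i) (S i) pstar) :
    ∀ i, ∀ p ∈ Icc 0 (N / γ), S i p = 0 := by
  have hph : (0:ℝ) < N / γ := div_pos hN hγ
  obtain ⟨hpmem, hpeq⟩ := hp
  have hS0 : ∀ j, S j 0 = 0 := fun j => (hS j).2.2
  have hSmono : ∀ j, MonotoneOn (S j) (Icc 0 (N / γ)) := fun j => (hS j).2.1
  have hSc : ∀ j, ContinuousOn (S j) (Icc 0 (N / γ)) := fun j => (hS j).1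
  have h0mem : (0:ℝ) ∈ Icc 0 (N / γ) := ⟨le_refl 0, le_of_lt hph⟩
  have hSnonneg : ∀ j, ∀ p ∈ Icc 0 (N / γ), 0 ≤ S j p := by
    intro j p hp
    have := hSmono j h0mem hp hp.1
    rwa [hS0 j] at this
  -- pstar > 0
  have hpstar_pos : 0 < pstar := by
    rcases lt_or_eq_of_le hpmem.1 with h | h
    · exact h
    · exfalso
      have hsum0 : (∑ j, S j pstar) = 0 := by
        rw [← h]
        calc (∑ j, S j 0) = ∑ j, (0:ℝ) := Finset.sum_congr rfl (fun j _ => hS0 j)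
          _ = 0 := by simp
      rw [hsum0, ← h] at hpeq
      simp at hpeq
      linarith
  have hIcc_sub : Icc (0:ℝ) pstar ⊆ Icc 0 (N / γ) := Icc_subset_Icc le_rfl hpmem.2
  have hSint : ∀ j, IntervalIntegrable (S j) MeasureTheory.volume 0 pstar := by
    intro j
    apply ContinuousOn.intervalIntegrable
    rw [uIcc_of_le hpmem.1]
    exact (hSc j).mono hIcc_sub
  -- Key step: for each agent, the integral of its supply up to pstar vanishes.
  have hkey : ∀ i, ∫ p in (0:ℝ)..pstar, S i p = 0 := by
    intro i
    have hInonneg : 0 ≤ ∫ p in (0:ℝ)..pstar, S i p := by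
      apply intervalIntegral.integral_nonneg hpmem.1
      intro u hu
      exact hSnonneg i u (hIcc_sub hu)
    set M := S i pstar with hM
    have hMnonneg : 0 ≤ M := hSnonneg i pstar hpmem
    -- deviation argument: for every ε ∈ (0, pstar], ∫ S i ≤ ε * M
    have hdev : ∀ ε : ℝ, 0 < ε → ε ≤ pstar → (∫ p in (0:ℝ)..pstar, S i p) ≤ ε * M := by
      intro ε hε hεle
      set a := pstar - ε with ha
      have ha0 : 0 ≤ a := by simp only [ha]; linarith
      have hapstar : a ≤ pstar := by simp only [ha]; linarith
      set T : ℝ → ℝ := fun p => M * max 0 ((p - a) / ε) with hTdef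
      have hTcont : Continuous T :=
        continuous_const.mul (continuous_const.max
          ((continuous_id.sub continuous_const).div_const ε))
      have hTmono : Monotone T := by
        intro x y hxy
        apply mul_le_mul_of_nonneg_left _ hMnonneg
        apply max_le_max le_rfl
        apply div_le_div_of_nonneg_right _ hε.le
        linarith
      have hT0 : T 0 = 0 := by
        have : ((0:ℝ) - a) / ε ≤ 0 := div_nonpos_iff.mpr (Or.inr ⟨by linarith, le_of_lt hε⟩)
        simp only [hTdef, max_eq_left this, mul_zero]
      have hTfeas : Feasible (N / γ) T :=
        ⟨hTcont.continuousOn, (hTmono.monotoneOn _), hT0⟩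
      have hTp : T pstar = M := by
        have h1 : (pstar - a) / ε = 1 := by
          field_simp [ha]
          linarith
        simp only [hTdef, h1]
        norm_num
      -- updated profile clears at pstar
      have hClears : Clears N γ (Function.update S i T) pstar := by
        refine ⟨hpmem, ?_⟩
        rw [hpeq]
        apply Finset.sum_congr rfl
        intro j _
        by_cases hj : j = i
        · subst hj; rw [Function.update_self, hTp]
        · rw [Function.update_of_ne hj]
      have hNle := hNash i T hTfeas pstar hClears
      -- unfold utilities
      have hub : utility (c i) T pstar = pstar * M - (∫ p in (0:ℝ)..pstar, T p) - c i * M ^ 2 := by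
        rw [utility, hTp]
      have hua : utility (c i) (S i) pstar
          = pstar * M - (∫ p in (0:ℝ)..pstar, S i p) - c i * M ^ 2 := by
        rw [utility]
      rw [hub, hua] at hNle
      have hST : (∫ p in (0:ℝ)..pstar, S i p) ≤ ∫ p in (0:ℝ)..pstar, T p := by linarith
      -- bound the integral of T
      have hTint1 : IntervalIntegrable T MeasureTheory.volume 0 a :=
        hTcont.intervalIntegrable 0 a
      have hTint2 : IntervalIntegrable T MeasureTheory.volume a pstar :=
        hTcont.intervalIntegrable a pstar
      have hsplit : (∫ p in (0:ℝ)..pstar, T p)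
          = (∫ p in (0:ℝ)..a, T p) + ∫ p in a..pstar, T p :=
        (intervalIntegral.integral_add_adjacent_intervals hTint1 hTint2).symm
      have hzero1 : (∫ p in (0:ℝ)..a, T p) = 0 := by
        rw [intervalIntegral.integral_congr (g := fun _ => (0:ℝ)), intervalIntegral.integral_const]
        · simp
        · intro x hx
          rw [uIcc_of_le ha0] at hx
          have : (x - a) / ε ≤ 0 := div_nonpos_iff.mpr (Or.inr ⟨by linarith [hx.2], le_of_lt hε⟩)
          simp only [hTdef, max_eq_left this, mul_zero]
      have hbound2 : (∫ p in a..pstar, T p) ≤ ε * M := by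
        have hle : ∀ x ∈ Icc a pstar, T x ≤ M := by
          intro x hx
          have h1 : (x - a) / ε ≤ 1 := by
            rw [div_le_one hε]
            simp only [ha] at hx ⊢
            linarith [hx.2]
          have : max 0 ((x - a) / ε) ≤ 1 := max_le (by norm_num) h1
          calc T x = M * max 0 ((x - a) / ε) := rfl
            _ ≤ M * 1 := mul_le_mul_of_nonneg_left this hMnonneg
            _ = M := mul_one M
        calc (∫ p in a..pstar, T p) ≤ ∫ _ in a..pstar, M :=
              intervalIntegral.integral_mono_on hapstar hTint2
                (intervalIntegrable_const) hle
          _ = (pstar - a) * M := by rw [intervalIntegral.integral_const, smul_eq_mul]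
          _ = ε * M := by simp only [ha]; ring
      calc (∫ p in (0:ℝ)..pstar, S i p) ≤ ∫ p in (0:ℝ)..pstar, T p := hST
        _ = (∫ p in (0:ℝ)..a, T p) + ∫ p in a..pstar, T p := hsplit
        _ = ∫ p in a..pstar, T p := by rw [hzero1, zero_add]
        _ ≤ ε * M := hbound2
    -- take ε → 0
    have hIle : ∀ δ : ℝ, 0 < δ → (∫ p in (0:ℝ)..pstar, S i p) ≤ δ := by
      intro δ hδ
      have hεpos : 0 < min pstar (δ / (M + 1)) := by
        apply lt_min hpstar_pos
        positivity
      have := hdev (min pstar (δ / (M + 1))) hεpos (min_le_left _ _)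
      have h2 : min pstar (δ / (M + 1)) * M ≤ (δ / (M + 1)) * M :=
        mul_le_mul_of_nonneg_right (min_le_right _ _) hMnonneg
      have h3 : (δ / (M + 1)) * M ≤ δ := by
        rw [div_mul_eq_mul_div, div_le_iff₀ (by linarith)]
        nlinarith
      linarith
    have hI0 : (∫ p in (0:ℝ)..pstar, S i p) ≤ 0 := by
      by_contra hcon
      push_neg at hcon
      have := hIle ((∫ p in (0:ℝ)..pstar, S i p) / 2) (by linarith)
      linarith
    linarith
  -- From vanishing integral: S i = 0 on [0, pstar)
  have hzero_lt : ∀ i, ∀ p ∈ Ico 0 pstar, S i p = 0 := by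
    intro i p hp
    have hpmem' : p ∈ Icc 0 (N / γ) := hIcc_sub ⟨hp.1, le_of_lt hp.2⟩
    have hint1 : IntervalIntegrable (S i) MeasureTheory.volume 0 p := by
      apply ContinuousOn.intervalIntegrable
      rw [uIcc_of_le hp.1]
      exact (hSc i).mono (Icc_subset_Icc le_rfl hpmem'.2)
    have hint2 : IntervalIntegrable (S i) MeasureTheory.volume p pstar := by
      apply ContinuousOn.intervalIntegrable
      rw [uIcc_of_le (le_of_lt hp.2)]
      exact (hSc i).mono (Icc_subset_Icc hp.1 hpmem.2)
    have hsplit : (∫ u in (0:ℝ)..pstar, S i u)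
        = (∫ u in (0:ℝ)..p, S i u) + ∫ u in p..pstar, S i u :=
      (intervalIntegral.integral_add_adjacent_intervals hint1 hint2).symm
    have h1 : 0 ≤ ∫ u in (0:ℝ)..p, S i u := by
      apply intervalIntegral.integral_nonneg hp.1
      intro u hu
      exact hSnonneg i u ⟨hu.1, le_trans hu.2 hpmem'.2⟩
    have h2 : (pstar - p) * S i p ≤ ∫ u in p..pstar, S i u := by
      have : (∫ _ in p..pstar, S i p) ≤ ∫ u in p..pstar, S i u := by
        apply intervalIntegral.integral_mono_on (le_of_lt hp.2) intervalIntegrable_const hint2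
        intro x hx
        exact hSmono i hpmem' (hIcc_sub ⟨le_trans hp.1 hx.1, hx.2⟩) hx.1
      rwa [intervalIntegral.integral_const, smul_eq_mul] at this
    have h3 : (pstar - p) * S i p ≤ 0 := by
      have := hkey i
      rw [hsplit] at this
      linarith
    have h4 : S i p ≤ 0 := by
      have hpp : 0 < pstar - p := by linarith [hp.2]
      nlinarith [hSnonneg i p hpmem']
    exact le_antisymm h4 (hSnonneg i p hpmem')
  -- S i pstar = 0 by continuity from the left
  have hzero_star : ∀ i, S i pstar = 0 := by
    intro i
    have hct : ContinuousWithinAt (S i) (Icc 0 (N / γ)) pstar := (hSc i) pstar hpmem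
    have hsub : Ico (0:ℝ) pstar ⊆ Icc 0 (N / γ) := fun x hx => hIcc_sub ⟨hx.1, le_of_lt hx.2⟩
    have htend : Filter.Tendsto (S i) (nhdsWithin pstar (Ico 0 pstar)) (nhds (S i pstar)) :=
      (hct.mono hsub).tendsto
    have htend0 : Filter.Tendsto (S i) (nhdsWithin pstar (Ico 0 pstar)) (nhds 0) := by
      apply Filter.Tendsto.congr' _ tendsto_const_nhds
      filter_upwards [self_mem_nhdsWithin] with x hx
      exact (hzero_lt i x hx).symm
    haveI : (nhdsWithin pstar (Ico 0 pstar)).NeBot := right_nhdsWithin_Ico_neBot hpstar_pos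
    exact tendsto_nhds_unique htend htend0
  -- hence pstar = N / γ
  have hpstar_eq : pstar = N / γ := by
    have hsum0 : (∑ j, S j pstar) = 0 := by
      calc (∑ j, S j pstar) = ∑ j, (0:ℝ) := Finset.sum_congr rfl (fun j _ => hzero_star j)
        _ = 0 := by simp
    rw [hsum0] at hpeq
    field_simp
    linarith
  -- conclude
  intro i p hp
  have h1 : S i p ≤ S i (N / γ) := hSmono i hp (right_mem_Icc.mpr (le_of_lt hph)) hp.2
  have h2 : S i (N / γ) = 0 := hpstar_eq ▸ hzero_star i
  have h3 : 0 ≤ S i p := hSnonneg i p hp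
  linarith
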